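/- Let b be the Erdős–Taylor sequence b₁ = 1, b_{n+1} = a_n b_n + 1, and let p > 0. If ∑_{n≥1} (b_n/b_{n+1})^p = ∞, then G_p(b) = {t ∈ ℝ/ℤ : ∑_n ‖b_n t‖^p < ∞} is trivial, i.e. equals {0}. -/

import Mathlib

/-- `G_p(b)` inside the circle `ℝ/ℤ`; the norm on `AddCircle (1:ℝ)` is the
distance to the nearest integer. -/
noncomputable def Gp (b : ℕ → ℕ) (p : ℝ) : Set (AddCircle (1:ℝ)) :=
  {t | Summable (fun n => ‖b n • t‖ ^ p)}

set_option maxHeartbeats 1000000 in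
/-- For an Erdős–Taylor sequence `b₁ = 1`, `bₙ₊₁ = aₙ bₙ + 1`:
if `∑ₙ (bₙ/bₙ₊₁)ᵖ = ∞` then `G_p(b) = {0}`. -/
theorem stmt9 (a b : ℕ → ℕ) (ha : ∀ n, 1 ≤ a n)
    (hb1 : b 1 = 1) (hrec : ∀ n, 1 ≤ n → b (n + 1) = a n * b n + 1)
    (p : ℝ) (hp : 0 < p)
    (hdiv : ¬ Summable (fun n => ((b (n + 1) : ℝ) / (b (n + 2) : ℝ)) ^ p)) :
    Gp b p = {0} := by
  ext t
  simp only [Gp, Set.mem_setOf_eq, Set.mem_singleton_iff]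
  constructor
  · intro hsum
    by_contra ht
    have hε : 0 < ‖t‖ := norm_pos_iff.mpr ht
    set ε := ‖t‖ with hεdef
    have hbpos : ∀ n, 1 ≤ n → 1 ≤ b n := by
      intro n hn
      match n, hn with
      | 1, _ => omega
      | (m+2), _ =>
        have h := hrec (m+1) (by omega)
        show 1 ≤ b (m+1+1)
        omega
    -- the terms tend to zero, so eventually ‖b n • t‖ < ε/2
    have htend := hsum.tendsto_atTop_zero
    have hev : ∀ᶠ n in Filter.atTop, ‖b n • t‖ ^ p < (ε/2) ^ p :=
      htend.eventually_lt_const (Real.rpow_pos_of_pos (by linarith) p)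
    obtain ⟨N, hN⟩ := Filter.eventually_atTop.mp hev
    have hsmall : ∀ n, N ≤ n → ‖b n • t‖ < ε/2 := by
      intro n hn
      by_contra h
      push_neg at h
      exact absurd (Real.rpow_le_rpow (by linarith) h hp.le) (not_le.mpr (hN n hn))
    -- key triangle inequality
    have key : ∀ n, 1 ≤ n → ε ≤ ‖b (n+1) • t‖ + (a n : ℝ) * ‖b n • t‖ := by
      intro n hn
      have hsm : b (n+1) • t = a n • (b n • t) + t := by
        rw [hrec n hn, add_nsmul, one_nsmul, mul_comm, mul_nsmul]
      have : t = b (n+1) • t - a n • (b n • t) := by rw [hsm]; abel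
      calc ε = ‖b (n+1) • t - a n • (b n • t)‖ := by rw [hεdef, ← this]
        _ ≤ ‖b (n+1) • t‖ + ‖a n • (b n • t)‖ := norm_sub_le _ _
        _ ≤ ‖b (n+1) • t‖ + (a n : ℝ) * ‖b n • t‖ := by
            gcongr
            exact norm_nsmul_le
    set M := max N 1 with hM
    -- lower bound for n ≥ M
    have hlow : ∀ n, M ≤ n → ((b n : ℝ) / (b (n+1) : ℝ)) ^ p ≤ (2/ε) ^ p * ‖b n • t‖ ^ p := by
      intro n hn
      have hn1 : 1 ≤ n := le_trans (le_max_right N 1) hn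
      have hnN : N ≤ n := le_trans (le_max_left N 1) hn
      have hk := key n hn1
      have hs1 : ‖b (n+1) • t‖ < ε/2 := hsmall (n+1) (by omega)
      have han : (0:ℝ) < a n := by exact_mod_cast ha n
      have hbn : (0:ℝ) < b n := by exact_mod_cast hbpos n hn1
      have hbn1 : (0:ℝ) < b (n+1) := by exact_mod_cast hbpos (n+1) (by omega)
      have h1 : ε/2 ≤ (a n : ℝ) * ‖b n • t‖ := by linarith
      have h2 : ε/(2 * a n) ≤ ‖b n • t‖ := by
        rw [div_le_iff₀ (by positivity)]
        calc ε ≤ 2 * ((a n : ℝ) * ‖b n • t‖) := by linarith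
          _ = ‖b n • t‖ * (2 * a n) := by ring
      have h3 : (b n : ℝ) / (b (n+1) : ℝ) ≤ 1 / (a n : ℝ) := by
        rw [div_le_div_iff₀ hbn1 han]
        have : (a n : ℝ) * (b n : ℝ) ≤ (b (n+1) : ℝ) := by
          have := hrec n hn1
          push_cast [this]
          linarith
        linarith
      have h4 : (b n : ℝ) / (b (n+1) : ℝ) ≤ (2/ε) * ‖b n • t‖ := by
        calc (b n : ℝ) / (b (n+1) : ℝ) ≤ 1 / (a n : ℝ) := h3
          _ ≤ (2/ε) * ‖b n • t‖ := by
              rw [div_le_iff₀ han]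
              calc (1:ℝ) = (2/ε) * (ε/2) := by field_simp
                _ ≤ (2/ε) * ((a n : ℝ) * ‖b n • t‖) := by
                    apply mul_le_mul_of_nonneg_left h1 (div_nonneg (by norm_num) hε.le)
                _ = 2/ε * ‖b n • t‖ * a n := by ring
      calc ((b n : ℝ) / (b (n+1) : ℝ)) ^ p ≤ ((2/ε) * ‖b n • t‖) ^ p :=
            Real.rpow_le_rpow (by positivity) h4 hp.le
        _ = (2/ε) ^ p * ‖b n • t‖ ^ p := Real.mul_rpow (div_nonneg (by norm_num) hε.le) (norm_nonneg _)
    -- summability transfer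
    have h1 : Summable (fun n => ‖b (n + M) • t‖ ^ p) := (summable_nat_add_iff M).2 hsum
    have h2 : Summable (fun n => ((b (n + M) : ℝ) / (b (n + M + 1) : ℝ)) ^ p) := by
      apply Summable.of_nonneg_of_le (fun n => by positivity)
        (fun n => hlow (n + M) (by omega)) (h1.mul_left ((2/ε) ^ p))
    obtain ⟨K, hK⟩ : ∃ K, M = K + 1 := ⟨M - 1, by omega⟩
    apply hdiv
    rw [← summable_nat_add_iff K]
    have : (fun n => ((b (n + K + 1) : ℝ) / (b (n + K + 2) : ℝ)) ^ p)
        = (fun n => ((b (n + M) : ℝ) / (b (n + M + 1) : ℝ)) ^ p) := by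
      funext n
      rw [hK]
      ring_nf
    exact this ▸ h2
  · rintro rfl
    simpa [Real.zero_rpow hp.ne'] using summable_zero
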